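/- arXiv:2412.03119 — 4 statements merged into one kernel-verified Lean document; each statement's English description precedes it below -/
import Mathlib

section
/- For positive integers m, n: ∑_{k=1}^{m} (k)_{n,λ} = ∑_{j=0}^{n} A_{-λ}(n,j) binom(m+j+1, n+1). -/
open Finset PowerSeries

/-- Degenerate falling factorial `(x)_{n,λ} = x(x-λ)⋯(x-(n-1)λ)`. -/
noncomputable def dfall (l x : ℝ) (n : ℕ) : ℝ := ∏ i ∈ Finset.range n, (x - i * l)

/-- Degenerate Eulerian number `A_λ(n,k) = ∑_{i=0}^k C(n+1,i)(-1)^i (k-i+1)_{n,λ}`. -/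
noncomputable def degEulerianNum (l : ℝ) (n k : ℕ) : ℝ :=
  ∑ i ∈ Finset.range (k+1), ((n+1).choose i : ℝ) * (-1)^i * dfall l ((k : ℝ) - i + 1) n

/-- Degenerate Eulerian polynomial `A_{n,λ}(x) = ∑_{k=0}^n A_λ(n,k) x^k`. -/
noncomputable def degEulerianPoly (l : ℝ) (n : ℕ) (x : ℝ) : ℝ :=
  ∑ k ∈ Finset.range (n+1), degEulerianNum l n k * x^k

/-- Generalized binomial coefficient `binom(y,m) = y(y-1)⋯(y-m+1)/m!`. -/
noncomputable def genBinom (y : ℝ) (m : ℕ) : ℝ :=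
  (∏ i ∈ Finset.range m, (y - i)) / m.factorial

/-- Degenerate exponential `e_λ^x(t) = ∑_k (x)_{k,λ} t^k/k!` as a formal power series. -/
noncomputable def degExp (l x : ℝ) : PowerSeries ℝ :=
  PowerSeries.mk fun k => dfall l x k / k.factorial

/-- Degenerate Stirling number of the second kind (explicit formula). -/
noncomputable def degStirling2 (l : ℝ) (n k : ℕ) : ℝ :=
  (-1)^k / k.factorial * ∑ j ∈ Finset.range (k+1), (-1)^j * (k.choose j : ℝ) * dfall l j n


open Polynomial in
lemma polyDiff : ∀ (n : ℕ) (P : Polynomial ℝ), P.natDegree ≤ n → ∀ x : ℝ,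
    ∑ i ∈ Finset.range (n+2), (-1:ℝ)^i * ((n+1).choose i : ℝ) * P.eval (x - i) = 0 := by
  intro n
  induction n with
  | zero =>
    intro P hP x
    obtain ⟨c, rfl⟩ := Polynomial.natDegree_eq_zero.mp (Nat.le_zero.mp hP)
    simp [Finset.sum_range_succ]
  | succ n IH =>
    intro P hP x
    set Q : Polynomial ℝ := P - P.comp (Polynomial.X - Polynomial.C 1) with hQ
    have hcompdeg : (P.comp (Polynomial.X - Polynomial.C 1)).natDegree = P.natDegree := by
      rw [Polynomial.natDegree_comp, Polynomial.natDegree_X_sub_C, mul_one]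
    have hQdeg : Q.natDegree ≤ n := by
      by_cases h : P.natDegree ≤ n
      · exact le_trans (Polynomial.natDegree_sub_le _ _) (max_le h (hcompdeg.le.trans h))
      · have hd : P.natDegree = n + 1 := by omega
        have hP0 : P ≠ 0 := by
          intro h0; rw [h0] at hd; simp at hd
        have hmon : ((Polynomial.X : Polynomial ℝ) - Polynomial.C 1).leadingCoeff = 1 :=
          (Polynomial.monic_X_sub_C (1:ℝ)).leadingCoeff
        have hlc : (P.comp (Polynomial.X - Polynomial.C 1)).leadingCoeff = P.leadingCoeff := by
          rw [Polynomial.leadingCoeff_comp (by rw [Polynomial.natDegree_X_sub_C]; norm_num)]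
          rw [hmon, one_pow, mul_one]
        have hdeg : Q.degree < P.degree := by
          apply Polynomial.degree_sub_lt _ hP0 hlc.symm
          have hcomp0 : P.comp (Polynomial.X - Polynomial.C 1) ≠ 0 := by
            intro h0
            apply hP0
            have h2 : P.leadingCoeff = 0 := by rw [← hlc, h0]; simp
            exact Polynomial.leadingCoeff_eq_zero.mp h2
          rw [Polynomial.degree_eq_natDegree hP0, Polynomial.degree_eq_natDegree hcomp0, hcompdeg]
        by_cases hQ0 : Q = 0
        · simp [hQ0]
        · have := (Polynomial.natDegree_lt_iff_degree_lt hQ0).mpr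
            (lt_of_lt_of_le hdeg (by rw [Polynomial.degree_eq_natDegree hP0, hd]))
          omega
    have hQeval : ∀ y : ℝ, Q.eval y = P.eval y - P.eval (y - 1) := by
      intro y; simp [hQ]
    have key : ∑ i ∈ Finset.range (n+3), (-1:ℝ)^i * ((n+2).choose i : ℝ) * P.eval (x - i)
        = ∑ i ∈ Finset.range (n+2), (-1:ℝ)^i * ((n+1).choose i : ℝ) * Q.eval (x - i) := by
      set h : ℕ → ℝ := fun i => (-1:ℝ)^i * ((n+1).choose i : ℝ) * P.eval (x - i) with hh
      have e1 : ∑ i ∈ Finset.range (n+3), (-1:ℝ)^i * ((n+2).choose i : ℝ) * P.eval (x - i)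
          = (∑ i ∈ Finset.range (n+2),
              ((-((-1:ℝ)^i * ((n+1).choose i : ℝ) * P.eval (x - i - 1))) + (h (i+1)))) + P.eval x := by
        rw [Finset.sum_range_succ' (fun i => (-1:ℝ)^i * ((n+2).choose i : ℝ) * P.eval (x - i)) (n+2)]
        congr 1
        · apply Finset.sum_congr rfl
          intro i _
          have : ((n+2).choose (i+1) : ℝ) = ((n+1).choose i : ℝ) + ((n+1).choose (i+1) : ℝ) := by
            rw [show n + 2 = (n+1) + 1 from rfl, Nat.choose_succ_succ]
            push_cast; ring
          rw [this, hh]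
          push_cast
          ring
        · simp
      have e2 : ∑ i ∈ Finset.range (n+2), h (i+1)
          = (∑ i ∈ Finset.range (n+2), h i) - P.eval x := by
        have a1 := Finset.sum_range_succ' h (n+2)
        have a2 := Finset.sum_range_succ h (n+2)
        have a3 : h (n+2) = 0 := by
          simp [hh, Nat.choose_eq_zero_of_lt (by omega : n + 1 < n + 2)]
        have a4 : h 0 = P.eval x := by simp [hh]
        rw [a3, add_zero] at a2
        rw [a4] at a1
        rw [a2] at a1
        linarith
      rw [e1, Finset.sum_add_distrib, e2]
      have e3 : ∑ i ∈ Finset.range (n+2), (-1:ℝ)^i * ((n+1).choose i : ℝ) * Q.eval (x - i)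
          = ∑ i ∈ Finset.range (n+2),
              (h i - (-1:ℝ)^i * ((n+1).choose i : ℝ) * P.eval (x - i - 1)) := by
        apply Finset.sum_congr rfl
        intro i _
        rw [hQeval, hh]
        ring
      rw [e3, Finset.sum_sub_distrib]
      have e4 : ∑ i ∈ Finset.range (n+2), (-((-1:ℝ)^i * ((n+1).choose i : ℝ) * P.eval (x - i - 1)))
          = - ∑ i ∈ Finset.range (n+2), (-1:ℝ)^i * ((n+1).choose i : ℝ) * P.eval (x - i - 1) := by
        rw [Finset.sum_neg_distrib]
      rw [e4]
      ring
    rw [key]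
    exact IH Q hQdeg x

open Polynomial in
lemma fullDiff (l : ℝ) (n : ℕ) (x : ℝ) :
    ∑ i ∈ Finset.range (n+2), (-1:ℝ)^i * ((n+1).choose i : ℝ) * dfall l (x - i) n = 0 := by
  have hev : ∀ y : ℝ, dfall l y n
      = (∏ i ∈ Finset.range n, (Polynomial.X - Polynomial.C ((i:ℝ) * l))).eval y := by
    intro y
    rw [dfall, Polynomial.eval_prod]
    exact Finset.prod_congr rfl (by intro i _; simp)
  have hdeg : (∏ i ∈ Finset.range n, (Polynomial.X - Polynomial.C ((i:ℝ) * l))).natDegree ≤ n := by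
    refine le_trans (Polynomial.natDegree_prod_le _ _) ?_
    have h1 : ∀ i ∈ Finset.range n, (Polynomial.X - Polynomial.C ((i:ℝ) * l)).natDegree ≤ 1 :=
      fun i _ => le_of_eq (Polynomial.natDegree_X_sub_C _)
    have := Finset.sum_le_card_nsmul _ _ 1 h1
    simpa using this
  have := polyDiff n _ hdeg x
  rw [← this]
  exact Finset.sum_congr rfl (fun i _ => by rw [hev])

lemma dfall_zero (l : ℝ) {n : ℕ} (hn : 1 ≤ n) : dfall l 0 n = 0 := by
  rw [dfall]
  apply Finset.prod_eq_zero (Finset.mem_range.mpr (by omega : 0 < n))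
  simp

lemma dfall_neg (l x : ℝ) (n : ℕ) : dfall l x n = (-1)^n * dfall (-l) (-x) n := by
  rw [dfall, dfall]
  have h1 : ((-1:ℝ))^n = ∏ _i ∈ Finset.range n, (-1:ℝ) := by simp
  rw [h1, ← Finset.prod_mul_distrib]
  exact Finset.prod_congr rfl (fun i _ => by ring)

lemma choose_prod (n a : ℕ) :
    (((n+a).choose n : ℝ)) * (n.factorial : ℝ) = ∏ r ∈ Finset.range n, ((a:ℝ) + 1 + r) := by
  induction n with
  | zero => simp
  | succ n IH =>
    rw [Finset.prod_range_succ, ← IH]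
    rw [show n+1+a = n+a+1 from by omega, Nat.factorial_succ]
    have key := congrArg (Nat.cast (R:=ℝ)) (Nat.add_one_mul_choose_eq (n+a) n)
    push_cast at key ⊢
    linear_combination (-((n.factorial:ℕ):ℝ)) * key

open Polynomial in
lemma L0full (n t : ℕ) (hn : 1 ≤ n) :
    ∑ i ∈ Finset.range (n+2), (-1:ℝ)^i * ((n+1).choose i : ℝ) * (((n + t - i).choose n : ℝ))
      = if t = 0 then 1 else 0 := by
  rcases Nat.eq_zero_or_pos t with ht | ht
  · subst ht
    rw [if_pos rfl]
    rw [Finset.sum_eq_single_of_mem 0 (by simp) (fun i _ hi => by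
      have h2 : n + 0 - i < n := by omega
      rw [Nat.choose_eq_zero_of_lt h2]
      simp)]
    simp
  · rw [if_neg (by omega)]
    set Q : Polynomial ℝ := ∏ r ∈ Finset.range n, (Polynomial.X + Polynomial.C ((r:ℝ)+1)) with hQ
    have hdeg : Q.natDegree ≤ n := by
      rw [hQ]
      refine le_trans (Polynomial.natDegree_prod_le _ _) ?_
      have h1 : ∀ r ∈ Finset.range n, (Polynomial.X + Polynomial.C ((r:ℝ)+1)).natDegree ≤ 1 :=
        fun r _ => le_of_eq (Polynomial.natDegree_X_add_C _)
      have := Finset.sum_le_card_nsmul _ _ 1 h1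
      simpa using this
    have hpd := polyDiff n Q hdeg (t:ℝ)
    have hterm : ∀ i ∈ Finset.range (n+2),
        (((n + t - i).choose n : ℝ)) * (n.factorial : ℝ) = Q.eval ((t:ℝ) - i) := by
      intro i hi
      simp only [Finset.mem_range] at hi
      have hev : Q.eval ((t:ℝ)-i) = ∏ r ∈ Finset.range n, ((t:ℝ) - i + ((r:ℝ)+1)) := by
        rw [hQ, Polynomial.eval_prod]
        exact Finset.prod_congr rfl (fun r _ => by simp)
      by_cases hit : i ≤ t
      · rw [show n + t - i = n + (t - i) from by omega, choose_prod, hev]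
        refine Finset.prod_congr rfl (fun r _ => ?_)
        rw [Nat.cast_sub hit]
        ring
      · rw [Nat.choose_eq_zero_of_lt (by omega)]
        push_cast
        rw [zero_mul]
        symm
        rw [hev]
        apply Finset.prod_eq_zero (Finset.mem_range.mpr (show i - t - 1 < n by omega))
        have hc : ((i - t - 1 : ℕ) : ℝ) = (i:ℝ) - (t:ℝ) - 1 := by
          rw [Nat.cast_sub (by omega), Nat.cast_sub (by omega)]
          norm_num
        rw [hc]
        ring
    have hmain : (∑ i ∈ Finset.range (n+2),
        (-1:ℝ)^i * ((n+1).choose i : ℝ) * (((n + t - i).choose n : ℝ))) * (n.factorial : ℝ) = 0 := by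
      rw [Finset.sum_mul, ← hpd]
      refine Finset.sum_congr rfl (fun i hi => ?_)
      rw [← hterm i hi]
      ring
    have hfac : ((n.factorial : ℕ) : ℝ) ≠ 0 := by
      exact_mod_cast Nat.factorial_ne_zero n
    exact (mul_eq_zero.mp hmain).resolve_right hfac

lemma eul_top (l' : ℝ) {n : ℕ} (hn : 1 ≤ n) : degEulerianNum l' n n = 0 := by
  have hfd := fullDiff l' n ((n:ℝ)+1)
  rw [Finset.sum_range_succ] at hfd
  have hzarg : (n:ℝ) + 1 - ((n+1 : ℕ) : ℝ) = 0 := by push_cast; ring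
  rw [hzarg, dfall_zero l' hn, mul_zero, add_zero] at hfd
  rw [degEulerianNum, ← hfd]
  refine Finset.sum_congr rfl (fun i _ => ?_)
  have harg : (n:ℝ) - i + 1 = (n:ℝ) + 1 - i := by ring
  rw [harg]
  ring

lemma eul_symm (l : ℝ) {n : ℕ} (hn : 1 ≤ n) {q : ℕ} (hq : q ≤ n - 1) :
    degEulerianNum (-l) n q = degEulerianNum l n (n - 1 - q) := by
  set g : ℕ → ℝ := fun i => (-1:ℝ)^i * ((n+1).choose i : ℝ) * dfall (-l) ((q:ℝ)+1-i) n with hg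
  have hfd := fullDiff (-l) n ((q:ℝ)+1)
  have hsplit : ∑ i ∈ Finset.range (q+1), g i + ∑ i ∈ Finset.Ico (q+1) (n+2), g i
      = ∑ i ∈ Finset.range (n+2), g i := by
    rw [Finset.range_eq_Ico, Finset.range_eq_Ico]
    exact Finset.sum_Ico_consecutive g (show 0 ≤ q+1 by omega) (show q+1 ≤ n+2 by omega)
  have hpeel : ∑ i ∈ Finset.Ico (q+1) (n+2), g i = g (q+1) + ∑ i ∈ Finset.Ico (q+2) (n+2), g i :=
    Finset.sum_eq_sum_Ico_succ_bot (by omega) g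
  have hgz : g (q+1) = 0 := by
    rw [hg]
    have : (q:ℝ) + 1 - ((q+1:ℕ):ℝ) = 0 := by push_cast; ring
    simp only [this, dfall_zero (-l) hn, mul_zero]
  have hE1 : degEulerianNum (-l) n q = ∑ i ∈ Finset.range (q+1), g i := by
    rw [degEulerianNum]
    refine Finset.sum_congr rfl (fun i _ => ?_)
    have harg : (q:ℝ) - i + 1 = (q:ℝ) + 1 - i := by ring
    rw [harg, hg]
    ring
  have hsum0 : ∑ i ∈ Finset.range (q+1), g i + ∑ i ∈ Finset.Ico (q+2) (n+2), g i = 0 := by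
    have : ∑ i ∈ Finset.range (n+2), g i = 0 := hfd
    rw [← hsplit, hpeel, hgz] at this
    linarith [this]
  have hE2 : degEulerianNum l n (n - 1 - q) = - ∑ i ∈ Finset.Ico (q+2) (n+2), g i := by
    rw [degEulerianNum, show n - 1 - q + 1 = n - q from by omega]
    rw [← Finset.sum_neg_distrib]
    refine Finset.sum_nbij' (fun a => n + 1 - a) (fun b => n + 1 - b)
      (fun a ha => ?_) (fun b hb => ?_) (fun a ha => ?_) (fun b hb => ?_) (fun a ha => ?_)
    · simp only [Finset.mem_range] at ha
      simp only [Finset.mem_Ico]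
      omega
    · simp only [Finset.mem_Ico] at hb
      simp only [Finset.mem_range]
      omega
    · simp only [Finset.mem_range] at ha
      omega
    · simp only [Finset.mem_Ico] at hb
      omega
    · simp only [Finset.mem_range] at ha
      show _ = -(g (n + 1 - a))
      have hc1 : ((n - 1 - q : ℕ) : ℝ) = (n:ℝ) - 1 - q := by
        rw [Nat.cast_sub (by omega), Nat.cast_sub (by omega)]
        norm_num
      have hc2 : ((n + 1 - a : ℕ) : ℝ) = (n:ℝ) + 1 - a := by
        rw [Nat.cast_sub (by omega)]
        push_cast
        ring
      have hch : (n+1).choose (n+1-a) = (n+1).choose a := Nat.choose_symm (by omega)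
      rw [hg]
      simp only []
      rw [hc1, hc2, hch]
      have hdn := dfall_neg l ((n:ℝ) - 1 - q - a + 1) n
      have harg : -((n:ℝ) - 1 - q - a + 1) = (q:ℝ) + 1 - ((n:ℝ) + 1 - a) := by ring
      rw [harg] at hdn
      rw [hdn]
      have hpow : (-1:ℝ)^(n+1-a) = (-1:ℝ)^(n+1+a) := by
        rw [neg_one_pow_eq_pow_mod_two, neg_one_pow_eq_pow_mod_two (n := n+1+a)]
        congr 1
        omega
      rw [hpow]
      ring_nf
  rw [hE1, hE2]
  linarith [hsum0]

lemma triangle_swap (N : ℕ) (G : ℕ → ℕ → ℝ) :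
    ∑ r ∈ Finset.range (N+1), ∑ i ∈ Finset.range (r+1), G i (r - i)
      = ∑ u ∈ Finset.range (N+1), ∑ i ∈ Finset.range (N+1-u), G i u := by
  rw [Finset.sum_sigma', Finset.sum_sigma']
  refine Finset.sum_nbij' (fun p => ⟨p.1 - p.2, p.2⟩) (fun p => ⟨p.1 + p.2, p.2⟩)
    (fun p hp => ?_) (fun p hp => ?_) (fun p hp => ?_) (fun p hp => ?_) (fun p hp => ?_)
  · simp only [Finset.mem_sigma, Finset.mem_range] at hp ⊢
    omega
  · simp only [Finset.mem_sigma, Finset.mem_range] at hp ⊢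
    omega
  · obtain ⟨a, b⟩ := p
    simp only [Finset.mem_sigma, Finset.mem_range] at hp
    exact Sigma.ext (show a - b + b = a by omega) (HEq.refl b)
  · obtain ⟨a, b⟩ := p
    simp only [Finset.mem_sigma, Finset.mem_range] at hp
    exact Sigma.ext (show a + b - b = a by omega) (HEq.refl b)
  · rfl

lemma inv_lemma (l' : ℝ) {n : ℕ} (hn : 1 ≤ n) : ∀ j : ℕ,
    dfall l' ((j:ℝ)+1) n
      = ∑ r ∈ Finset.range (n+1), degEulerianNum l' n r * (((n + j - r).choose n : ℝ)) := by
  intro j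
  induction j using Nat.strong_induction_on with
  | _ j IH =>
  by_cases hj : j ≤ n
  · -- base case : j ≤ n
    symm
    set G : ℕ → ℕ → ℝ := fun i u => (-1:ℝ)^i * ((n+1).choose i : ℝ)
      * (dfall l' ((u:ℝ)+1) n * ((n + j - i - u).choose n : ℝ)) with hG
    have step1 : ∑ r ∈ Finset.range (n+1), degEulerianNum l' n r * (((n + j - r).choose n : ℝ))
        = ∑ r ∈ Finset.range (n+1), ∑ i ∈ Finset.range (r+1), G i (r - i) := by
      refine Finset.sum_congr rfl (fun r hr => ?_)
      rw [degEulerianNum, Finset.sum_mul]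
      refine Finset.sum_congr rfl (fun i hi => ?_)
      simp only [Finset.mem_range] at hr hi
      simp only [hG]
      have h1 : ((r - i : ℕ) : ℝ) + 1 = (r:ℝ) - i + 1 := by
        rw [Nat.cast_sub (by omega)]
      have h2 : n + j - i - (r - i) = n + j - r := by omega
      rw [h1, h2]
      ring
    rw [step1, triangle_swap]
    have step2 : ∀ u ∈ Finset.range (n+1),
        ∑ i ∈ Finset.range (n+1-u), G i u = if u = j then dfall l' ((u:ℝ)+1) n else 0 := by
      intro u hu
      simp only [Finset.mem_range] at hu
      simp only [hG]
      have hext : ∑ i ∈ Finset.range (n+1-u),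
            (-1:ℝ)^i * ((n+1).choose i : ℝ)
              * (dfall l' ((u:ℝ)+1) n * ((n + j - i - u).choose n : ℝ))
          = ∑ i ∈ Finset.range (n+2),
            (-1:ℝ)^i * ((n+1).choose i : ℝ)
              * (dfall l' ((u:ℝ)+1) n * ((n + j - i - u).choose n : ℝ)) := by
        refine Finset.sum_subset (Finset.range_subset_range.mpr (by omega)) (fun i _ hni => ?_)
        simp only [Finset.mem_range, not_lt] at hni
        have : n + j - i - u < n := by omega
        rw [Nat.choose_eq_zero_of_lt this]
        simp
      rw [hext]
      by_cases huj : u ≤ j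
      · have : ∑ i ∈ Finset.range (n+2),
              (-1:ℝ)^i * ((n+1).choose i : ℝ)
                * (dfall l' ((u:ℝ)+1) n * ((n + j - i - u).choose n : ℝ))
            = dfall l' ((u:ℝ)+1) n * ∑ i ∈ Finset.range (n+2),
              (-1:ℝ)^i * ((n+1).choose i : ℝ) * ((n + (j - u) - i).choose n : ℝ) := by
          rw [Finset.mul_sum]
          refine Finset.sum_congr rfl (fun i _ => ?_)
          rw [show n + j - i - u = n + (j - u) - i from by omega]
          ring
        rw [this, L0full n (j-u) hn]
        by_cases huj2 : u = j
        · rw [if_pos (by omega : j - u = 0), if_pos huj2, mul_one]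
        · rw [if_neg (by omega : ¬ j - u = 0), if_neg huj2, mul_zero]
      · rw [if_neg (by omega)]
        apply Finset.sum_eq_zero
        intro i _
        rw [Nat.choose_eq_zero_of_lt (show n + j - i - u < n by omega)]
        simp
    rw [Finset.sum_congr rfl step2]
    rw [Finset.sum_ite_eq' (Finset.range (n+1)) j (fun u => dfall l' ((u:ℝ)+1) n)]
    rw [if_pos (Finset.mem_range.mpr (by omega))]
  · -- inductive case : j ≥ n+1
    push_neg at hj
    have hfd := fullDiff l' n ((j:ℝ)+1)
    rw [Finset.sum_range_succ'] at hfd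
    simp only [Nat.cast_zero, pow_zero, Nat.choose_zero_right, Nat.cast_one, one_mul, mul_one,
      sub_zero] at hfd
    have key : ∀ r ∈ Finset.range (n+1),
        degEulerianNum l' n r * (∑ i ∈ Finset.range (n+2),
          (-1:ℝ)^i * ((n+1).choose i : ℝ) * ((n + (j - r) - i).choose n : ℝ)) = 0 := by
      intro r hr
      simp only [Finset.mem_range] at hr
      rw [L0full n (j-r) hn, if_neg (by omega), mul_zero]
    have hzero : ∑ r ∈ Finset.range (n+1), degEulerianNum l' n r * (∑ i ∈ Finset.range (n+2),
          (-1:ℝ)^i * ((n+1).choose i : ℝ) * ((n + (j - r) - i).choose n : ℝ)) = 0 :=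
      Finset.sum_eq_zero key
    have hexp : ∑ r ∈ Finset.range (n+1), degEulerianNum l' n r * (∑ i ∈ Finset.range (n+2),
          (-1:ℝ)^i * ((n+1).choose i : ℝ) * ((n + (j - r) - i).choose n : ℝ))
        = ∑ r ∈ Finset.range (n+1), degEulerianNum l' n r * (((n + j - r).choose n : ℝ))
          + ∑ i ∈ Finset.range (n+1), (-1:ℝ)^(i+1) * ((n+1).choose (i+1) : ℝ)
              * ∑ r ∈ Finset.range (n+1),
                  degEulerianNum l' n r * (((n + (j-1-i) - r).choose n : ℝ)) := by
      have hin : ∀ r ∈ Finset.range (n+1), degEulerianNum l' n r * (∑ i ∈ Finset.range (n+2),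
            (-1:ℝ)^i * ((n+1).choose i : ℝ) * ((n + (j - r) - i).choose n : ℝ))
          = degEulerianNum l' n r * (((n + j - r).choose n : ℝ))
            + ∑ i ∈ Finset.range (n+1), (-1:ℝ)^(i+1) * ((n+1).choose (i+1) : ℝ)
                * (degEulerianNum l' n r * (((n + (j-1-i) - r).choose n : ℝ))) := by
        intro r hr
        simp only [Finset.mem_range] at hr
        rw [Finset.sum_range_succ']
        rw [mul_add, Finset.mul_sum]
        have h0 : (-1:ℝ)^0 * ((n+1).choose 0 : ℝ) * ((n + (j - r) - 0).choose n : ℝ)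
            = ((n + j - r).choose n : ℝ) := by
          rw [show n + (j - r) - 0 = n + j - r from by omega]
          simp
        rw [h0, add_comm]
        congr 1
        refine Finset.sum_congr rfl (fun i hi => ?_)
        simp only [Finset.mem_range] at hi
        rw [show n + (j - r) - (i+1) = n + (j-1-i) - r from by omega]
        ring
      rw [Finset.sum_congr rfl hin, Finset.sum_add_distrib]
      congr 1
      rw [Finset.sum_comm]
      refine Finset.sum_congr rfl (fun i _ => ?_)
      rw [Finset.mul_sum]
    rw [hexp] at hzero
    have hIH : ∀ i ∈ Finset.range (n+1),
        ∑ r ∈ Finset.range (n+1), degEulerianNum l' n r * (((n + (j-1-i) - r).choose n : ℝ))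
        = dfall l' ((j:ℝ) - i) n := by
      intro i hi
      simp only [Finset.mem_range] at hi
      have h2 := (IH (j-1-i) (by omega)).symm
      have hc : (((j-1-i : ℕ)):ℝ) + 1 = (j:ℝ) - i := by
        rw [Nat.cast_sub (by omega), Nat.cast_sub (by omega)]
        push_cast
        ring
      rw [hc] at h2
      exact h2
    have hrw : ∑ i ∈ Finset.range (n+1), (-1:ℝ)^(i+1) * ((n+1).choose (i+1) : ℝ)
              * ∑ r ∈ Finset.range (n+1),
                  degEulerianNum l' n r * (((n + (j-1-i) - r).choose n : ℝ))
        = ∑ i ∈ Finset.range (n+1), (-1:ℝ)^(i+1) * ((n+1).choose (i+1) : ℝ)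
              * dfall l' ((j:ℝ) - i) n :=
      Finset.sum_congr rfl (fun i hi => by rw [hIH i hi])
    rw [hrw] at hzero
    have hfd2 : ∑ i ∈ Finset.range (n+1), (-1:ℝ)^(i+1) * ((n+1).choose (i+1) : ℝ)
          * dfall l' ((j:ℝ) - i) n + dfall l' ((j:ℝ)+1) n = 0 := by
      rw [← hfd]
      congr 1
      refine Finset.sum_congr rfl (fun i _ => ?_)
      have : (j:ℝ) + 1 - ((i:ℕ)+1 : ℕ) = (j:ℝ) - i := by push_cast; ring
      rw [← this]
    linarith [hzero, hfd2]

lemma worpitzky (l : ℝ) {n k : ℕ} (hn : 1 ≤ n) (hk : 1 ≤ k) :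
    dfall l (k:ℝ) n
      = ∑ j ∈ Finset.range (n+1), degEulerianNum (-l) n j * (((k + j).choose n : ℝ)) := by
  have hinv := inv_lemma l hn (k-1)
  have hc : (((k-1:ℕ)):ℝ) + 1 = (k:ℝ) := by
    rw [Nat.cast_sub hk]
    ring
  rw [hc] at hinv
  rw [hinv, Finset.sum_range_succ, Finset.sum_range_succ, eul_top l hn, eul_top (-l) hn,
    zero_mul, zero_mul, add_zero, add_zero]
  rw [← Finset.sum_range_reflect]
  refine Finset.sum_congr rfl (fun j hj => ?_)
  simp only [Finset.mem_range] at hj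
  rw [← eul_symm l hn (show j ≤ n - 1 by omega)]
  rw [show n + (k-1) - (n-1-j) = k + j from by omega]

lemma hockey (j n : ℕ) : ∀ m : ℕ,
    (∑ k ∈ Finset.Icc 1 m, (((k + j).choose n : ℝ)))
      = ((m + j + 1).choose (n+1) : ℝ) - (((j+1).choose (n+1) : ℝ)) := by
  intro m
  induction m with
  | zero => simp
  | succ m IH =>
    rw [← Finset.Ico_add_one_right_eq_Icc, Finset.sum_Ico_succ_top (by omega), Finset.Ico_add_one_right_eq_Icc, IH]
    have h1 : (m+1+j+1).choose (n+1) = (m+j+1).choose n + (m+j+1).choose (n+1) := by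
      rw [show m+1+j+1 = (m+j+1)+1 from by omega]
      exact Nat.choose_succ_succ (m+j+1) n
    have h2 := congrArg (Nat.cast (R:=ℝ)) h1
    push_cast at h2 ⊢
    rw [show m+1+j = m+j+1 from by omega] at h2 ⊢
    linarith [h2]


/-- for `m, n ≥ 1`,
`∑_{k=1}^m (k)_{n,λ} = ∑_{j=0}^n A_{-λ}(n,j) binom(m+j+1, n+1)`. -/
theorem stmt12 (l : ℝ) (m n : ℕ) (hm : 1 ≤ m) (hn : 1 ≤ n) :
    ∑ k ∈ Finset.Icc 1 m, dfall l k n =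
      ∑ j ∈ Finset.range (n + 1), degEulerianNum (-l) n j * ((m + j + 1).choose (n + 1) : ℝ) := by
  have hW : ∀ k ∈ Finset.Icc 1 m, dfall l (k:ℝ) n
      = ∑ j ∈ Finset.range (n+1), degEulerianNum (-l) n j * (((k + j).choose n : ℝ)) := by
    intro k hk
    simp only [Finset.mem_Icc] at hk
    exact worpitzky l hn hk.1
  rw [Finset.sum_congr rfl hW, Finset.sum_comm]
  have hcol : ∀ j ∈ Finset.range (n+1),
      ∑ k ∈ Finset.Icc 1 m, degEulerianNum (-l) n j * (((k + j).choose n : ℝ))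
        = degEulerianNum (-l) n j * ((m + j + 1).choose (n+1) : ℝ)
          - degEulerianNum (-l) n j * (((j+1).choose (n+1) : ℝ)) := by
    intro j _
    rw [← Finset.mul_sum, hockey j n m]
    ring
  rw [Finset.sum_congr rfl hcol, Finset.sum_sub_distrib]
  have hz : ∑ j ∈ Finset.range (n+1),
      degEulerianNum (-l) n j * (((j+1).choose (n+1) : ℝ)) = 0 := by
    apply Finset.sum_eq_zero
    intro j hj
    simp only [Finset.mem_range] at hj
    by_cases hjn : j = n
    · subst hjn
      rw [eul_top (-l) hn, zero_mul]
    · rw [Nat.choose_eq_zero_of_lt (by omega)]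
      simp
  rw [hz, sub_zero]
end

section
/- For positive integers n and k with 1 ≤ k ≤ n: A_λ(n, k-1) = (-1)^k ∑_{j=0}^{k} (-1)^j binom(n-j, n-k) j! {n brace j}_λ. -/
open Finset PowerSeries

lemma hockey_s15 (a m : ℕ) : ∑ j ∈ range m, j.choose a = m.choose (a+1) := by
  induction m with
  | zero => simp
  | succ m ih => rw [Finset.sum_range_succ, ih, Nat.choose_succ_succ' m a]; omega

lemma key (m : ℕ) : ∀ a b : ℕ, ∑ j ∈ range (m+1), (j.choose a) * ((m-j).choose b)
    = (m+1).choose (a+b+1) := by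
  induction m with
  | zero =>
    intro a b
    cases a <;> cases b <;> simp [Nat.choose]
  | succ m ih =>
    intro a b
    rw [Finset.sum_range_succ]
    cases b with
    | zero =>
      simp only [Nat.choose_zero_right, mul_one, Nat.add_zero]
      rw [← Finset.sum_range_succ (fun j => j.choose a)]
      exact hockey_s15 a (m+2)
    | succ b =>
      have h1 : ∀ j ∈ range (m+1), j.choose a * ((m+1-j).choose (b+1))
          = j.choose a * ((m-j).choose b) + j.choose a * ((m-j).choose (b+1)) := by
        intro j hj
        rw [mem_range] at hj
        have : m + 1 - j = (m - j) + 1 := by omega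
        rw [this, Nat.choose_succ_succ, Nat.mul_add]
      rw [Finset.sum_congr rfl h1, Finset.sum_add_distrib, ih a b, ih a (b+1)]
      have h2 : a + (b+1) + 1 = (a + b + 1) + 1 := by ring
      simp only [Nat.sub_self, Nat.choose_zero_succ, mul_zero, add_zero, h2,
        Nat.choose_succ_succ (m+1) (a+b+1)]

/-- for `1 ≤ k ≤ n`,
`A_λ(n,k-1) = (-1)^k ∑_{j=0}^k (-1)^j binom(n-j, n-k) j! {n brace j}_λ`. -/
theorem stmt15 (l : ℝ) (n k : ℕ) (hk1 : 1 ≤ k) (hkn : k ≤ n) :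
    degEulerianNum l n (k - 1) =
      (-1)^k * ∑ j ∈ Finset.range (k + 1),
        (-1)^j * ((n - j).choose (n - k) : ℝ) * (j.factorial : ℝ) * degStirling2 l n j := by
  -- Step 1: simplify the RHS summand
  have hterm : ∀ j ∈ range (k+1),
      (-1:ℝ)^j * ((n-j).choose (n-k) : ℝ) * (j.factorial : ℝ) * degStirling2 l n j
      = ∑ i ∈ range (k+1),
          ((n-j).choose (n-k) : ℝ) * ((-1)^i * (j.choose i : ℝ) * dfall l i n) := by
    intro j hj
    rw [mem_range] at hj
    unfold degStirling2
    have hext : ∑ i ∈ range (j+1), (-1:ℝ)^i * (j.choose i : ℝ) * dfall l i n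
        = ∑ i ∈ range (k+1), (-1:ℝ)^i * (j.choose i : ℝ) * dfall l i n := by
      apply Finset.sum_subset
      · intro x hx
        rw [mem_range] at *
        omega
      · intro x _ hx2
        rw [mem_range, not_lt] at hx2
        rw [Nat.choose_eq_zero_of_lt (by omega)]
        simp
    rw [hext, ← Finset.mul_sum]
    have hsq : ((-1:ℝ)^j) * ((-1:ℝ)^j) = 1 := by
      rw [← pow_add, ← two_mul, pow_mul]
      norm_num
    have hf : (j.factorial : ℝ) ≠ 0 := Nat.cast_ne_zero.2 j.factorial_ne_zero
    set S := ∑ i ∈ range (k+1), (-1:ℝ)^i * (j.choose i : ℝ) * dfall l i n with hS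
    have hrw : (-1:ℝ)^j * ((n-j).choose (n-k) : ℝ) * (j.factorial : ℝ)
        * ((-1:ℝ)^j / (j.factorial : ℝ) * S)
        = ((-1:ℝ)^j * (-1:ℝ)^j) * ((j.factorial : ℝ) / (j.factorial : ℝ))
            * (((n-j).choose (n-k) : ℝ) * S) := by ring
    rw [hrw, hsq, div_self hf, one_mul, one_mul]
  rw [Finset.sum_congr rfl hterm, Finset.sum_comm]
  -- Step 2: binomial convolution identity
  have hkey : ∀ i ∈ range (k+1),
      (∑ j ∈ range (k+1), ((n-j).choose (n-k) : ℝ) * ((-1:ℝ)^i * (j.choose i : ℝ) * dfall l i n))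
      = ((n+1).choose (k-i) : ℝ) * ((-1:ℝ)^i * dfall l i n) := by
    intro i hi
    rw [mem_range] at hi
    have hnat : ∑ j ∈ range (k+1), ((n-j).choose (n-k)) * (j.choose i) = (n+1).choose (k-i) := by
      have hext : ∑ j ∈ range (k+1), ((n-j).choose (n-k)) * (j.choose i)
          = ∑ j ∈ range (n+1), (j.choose i) * ((n-j).choose (n-k)) := by
        rw [Finset.sum_congr rfl (fun j _ => mul_comm ((n-j).choose (n-k)) (j.choose i))]
        apply Finset.sum_subset
        · intro x hx
          rw [mem_range] at *
          omega
        · intro x hx hx2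
          rw [mem_range, not_lt] at hx2
          rw [mem_range] at hx
          rw [Nat.choose_eq_zero_of_lt (show n - x < n - k by omega)]
          simp
      rw [hext, key n i (n-k), show i + (n-k) + 1 = (n+1) - (k-i) by omega,
        Nat.choose_symm (by omega)]
    calc ∑ j ∈ range (k+1),
          ((n-j).choose (n-k) : ℝ) * ((-1:ℝ)^i * (j.choose i : ℝ) * dfall l i n)
        = (∑ j ∈ range (k+1), (((n-j).choose (n-k)) * (j.choose i) : ℕ))
            * ((-1:ℝ)^i * dfall l i n) := by
          rw [Nat.cast_sum, Finset.sum_mul]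
          exact Finset.sum_congr rfl fun j _ => by push_cast; ring
      _ = ((n+1).choose (k-i) : ℝ) * ((-1:ℝ)^i * dfall l i n) := by rw [hnat]
  rw [Finset.sum_congr rfl hkey, Finset.mul_sum]
  -- Step 3: peel off the i = 0 term (which vanishes) and reindex
  rw [Finset.sum_range_succ']
  have h0 : dfall l ((0:ℕ):ℝ) n = 0 := by
    apply Finset.prod_eq_zero (Finset.mem_range.2 (show 0 < n by omega))
    norm_num
  rw [h0]
  unfold degEulerianNum
  rw [show (k - 1) + 1 = k by omega, ← Finset.sum_range_reflect]
  simp only [mul_zero, add_zero]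
  apply Finset.sum_congr rfl
  intro j hj
  rw [mem_range] at hj
  have harg : ((k-1 : ℕ):ℝ) - ((k-1-j : ℕ):ℝ) + 1 = ((j+1 : ℕ):ℝ) := by
    rw [Nat.cast_sub hk1, Nat.cast_sub (by omega : j ≤ k - 1), Nat.cast_sub hk1]
    push_cast
    ring
  rw [harg, show k - (j+1) = k - 1 - j by omega]
  have hsign : (-1:ℝ)^k * (-1:ℝ)^(j+1) = (-1:ℝ)^(k-1-j) := by
    rw [← pow_add, show k + (j+1) = (k-1-j) + 2*(j+1) by omega, pow_add, pow_mul]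
    norm_num
  linear_combination (-((((n+1).choose (k-1-j) : ℕ)) : ℝ) * dfall l ((j+1:ℕ):ℝ) n) * hsign
end

section
/- As a polynomial identity in x: ∑_{k=1}^{n} A_λ(n, k-1) x^k = ∑_{k=0}^{n} k! {n brace k}_λ x^k (1-x)^{n-k}, for every n ≥ 1. -/
open Finset PowerSeries

lemma dfall_one_eq (m j : ℕ) : dfall 1 (m:ℝ) j = (j.factorial : ℝ) * (m.choose j) := by
  induction j with
  | zero => simp [dfall]
  | succ j ih =>
    rw [dfall, Finset.prod_range_succ, ← dfall, ih]
    rcases le_or_gt (j+1) m with h | h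
    · have hj : (j:ℝ) ≤ m := by exact_mod_cast Nat.le_of_succ_le h
      have key := Nat.choose_succ_right_eq m j
      have key' : ((m.choose (j+1) : ℝ)) * (j+1) = (m.choose j : ℝ) * ((m:ℝ) - j) := by
        have h2 : (j:ℕ) ≤ m := Nat.le_of_succ_le h
        have := congrArg (fun t : ℕ => (t:ℝ)) key
        push_cast [Nat.cast_sub h2] at this
        linarith [this]
      push_cast [Nat.factorial_succ]
      nlinarith [key']
    · rw [Nat.choose_eq_zero_of_lt h]
      rcases lt_or_eq_of_le (Nat.lt_succ_iff.mp h) with h2 | h2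
      · rw [Nat.choose_eq_zero_of_lt h2]; ring
      · subst h2; push_cast; ring

noncomputable def Fa (n j k : ℕ) : ℝ :=
  ∑ i ∈ Finset.range (k+1), (-1:ℝ)^i * ((n+1).choose i : ℝ) * (((k-i).choose j : ℕ) : ℝ)

lemma Fa_zero_of_lt {n j k : ℕ} (h : k < j) : Fa n j k = 0 := by
  unfold Fa
  apply Finset.sum_eq_zero
  intro i _
  rw [Nat.choose_eq_zero_of_lt (lt_of_le_of_lt (Nat.sub_le k i) h)]
  simp

lemma Fa_rec (n j k : ℕ) : Fa n (j+1) (k+1) = Fa n (j+1) k + Fa n j k := by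
  unfold Fa
  rw [Finset.sum_range_succ]
  have h0 : ((k+1-(k+1)).choose (j+1) : ℝ) = 0 := by simp
  rw [h0, mul_zero, add_zero, ← Finset.sum_add_distrib]
  apply Finset.sum_congr rfl
  intro i hi
  have hik : i ≤ k := Nat.lt_succ_iff.mp (Finset.mem_range.mp hi)
  have : k + 1 - i = (k - i) + 1 := by omega
  rw [this, Nat.choose_succ_succ]
  push_cast
  ring

lemma Fa_j0 (n k : ℕ) : Fa n 0 k = (-1:ℝ)^k * (n.choose k : ℝ) := by
  induction k with
  | zero => simp [Fa]
  | succ k ih =>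
    unfold Fa at *
    have : ∀ i ∈ Finset.range (k+1), (-1:ℝ)^i * ((n+1).choose i : ℝ) * (((k+1-i).choose 0 : ℕ) : ℝ)
        = (-1:ℝ)^i * ((n+1).choose i : ℝ) * (((k-i).choose 0 : ℕ) : ℝ) := by
      intro i _; simp
    rw [Finset.sum_range_succ, Finset.sum_congr rfl this, ih, Nat.choose_succ_succ n k]
    simp only [Nat.sub_self, Nat.choose_zero_right]
    push_cast
    ring

lemma Fa_main (n : ℕ) : ∀ k, k ≤ n → ∀ j, j ≤ k →
    Fa n j k = (-1:ℝ)^(k-j) * (((n-j).choose (k-j) : ℕ) : ℝ) := by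
  intro k
  induction k with
  | zero =>
    intro _ j hj
    interval_cases j
    simp [Fa_j0]
  | succ k ih =>
    intro hk j hj
    cases j with
    | zero => simpa using Fa_j0 n (k+1)
    | succ j' =>
      rw [Fa_rec]
      rcases Nat.lt_succ_iff_lt_or_eq.mp hj with h | h
      · have h1 : j' + 1 ≤ k := h
        have e1 := ih (le_of_lt (Nat.lt_of_succ_le hk)) (j'+1) h1
        have e2 := ih (le_of_lt (Nat.lt_of_succ_le hk)) j' (by omega)
        rw [e1, e2]
        have a1 : k - j' = (k - (j'+1)) + 1 := by omega
        have a2 : n - j' = (n - (j'+1)) + 1 := by omega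
        have a3 : k + 1 - (j'+1) = (k - (j'+1)) + 1 := by omega
        rw [a1, a2, a3, Nat.choose_succ_succ (n - (j'+1)) (k - (j'+1))]
        push_cast
        ring
      · have hk' : j' = k := by omega
        subst hk'
        rw [Fa_zero_of_lt (Nat.lt_succ_self j'), ih (by omega) j' le_rfl]
        simp

lemma sumxF (n j : ℕ) (hj1 : 1 ≤ j) (hjn : j ≤ n) (x : ℝ) :
    ∑ k ∈ Finset.Icc 1 n, x^k * Fa n j k = x^j * (1-x)^(n-j) := by
  have hsub : Finset.Icc j n ⊆ Finset.Icc 1 n := Finset.Icc_subset_Icc hj1 le_rfl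
  have h1 : ∑ k ∈ Finset.Icc 1 n, x^k * Fa n j k = ∑ k ∈ Finset.Icc j n, x^k * Fa n j k := by
    refine (Finset.sum_subset hsub ?_).symm
    intro k hk hk'
    simp only [Finset.mem_Icc] at hk hk'
    rw [Fa_zero_of_lt (by omega), mul_zero]
  rw [h1]
  have h2 : Finset.Icc j n = (Finset.Icc 0 (n-j)).map (addLeftEmbedding j) := by
    rw [map_add_left_Icc]
    congr 1 <;> omega
  rw [h2, Finset.sum_map]
  have h3 : Finset.Icc 0 (n-j) = Finset.range (n-j+1) := by
    rw [← Finset.Ico_add_one_right_eq_Icc, ← Finset.range_eq_Ico]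
  rw [h3]
  have h4 : ∀ m ∈ Finset.range (n-j+1),
      x^(addLeftEmbedding j m) * Fa n j (addLeftEmbedding j m)
        = x^j * ((-x)^m * 1^(n-j-m) * (((n-j).choose m : ℕ) : ℝ)) := by
    intro m hm
    have hm' : m ≤ n - j := Nat.lt_succ_iff.mp (Finset.mem_range.mp hm)
    simp only [addLeftEmbedding_apply]
    rw [Fa_main n (j+m) (by omega) j (by omega)]
    have e : j + m - j = m := by omega
    rw [e, pow_add]
    ring
  rw [Finset.sum_congr rfl h4, ← Finset.mul_sum, ← add_pow (-x) 1 (n-j),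
    show (-x) + 1 = 1 - x from by ring]


/-- with `S k = {n brace k}_λ` defined by `(x)_{n,λ} = ∑_{k=0}^n S k (x)_k`,
for `n ≥ 1` and all `x`:
`∑_{k=1}^n A_λ(n,k-1) x^k = ∑_{k=0}^n k! S k x^k (1-x)^{n-k}`. -/
theorem stmt17 (l : ℝ) (n : ℕ) (hn : 1 ≤ n) (S : ℕ → ℝ)
    (hS : ∀ x : ℝ, dfall l x n = ∑ k ∈ Finset.range (n + 1), S k * dfall 1 x k) :
    ∀ x : ℝ,
      ∑ k ∈ Finset.Icc 1 n, degEulerianNum l n (k - 1) * x ^ k =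
        ∑ k ∈ Finset.range (n + 1), (k.factorial : ℝ) * S k * x ^ k * (1 - x) ^ (n - k) := by
  have hS0 : S 0 = 0 := by
    have h := hS 0
    have hL : dfall l 0 n = 0 := by
      unfold dfall
      exact Finset.prod_eq_zero (Finset.mem_range.mpr (by omega : 0 < n)) (by simp)
    have hR : ∑ k ∈ Finset.range (n+1), S k * dfall 1 0 k = S 0 := by
      rw [Finset.sum_eq_single 0]
      · simp [dfall]
      · intro k _ hk
        have : dfall 1 0 k = 0 := by
          unfold dfall
          exact Finset.prod_eq_zero (Finset.mem_range.mpr (by omega : 0 < k)) (by simp)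
        rw [this, mul_zero]
      · intro h'; exact absurd (Finset.mem_range.mpr (by omega)) h'
    rw [hL] at h
    rw [← hR, ← h]
  intro x
  -- rewrite LHS termwise
  have key : ∀ k ∈ Finset.Icc 1 n, degEulerianNum l n (k-1) * x^k
      = ∑ j ∈ Finset.range (n+1), S j * ((j.factorial : ℝ) *
          (x^k * ∑ i ∈ Finset.range k, (-1:ℝ)^i * ((n+1).choose i : ℝ) * (((k-i).choose j : ℕ) : ℝ))) := by
    intro k hk
    simp only [Finset.mem_Icc] at hk
    have hk1 : 1 ≤ k := hk.1
    have hrange : k - 1 + 1 = k := by omega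
    unfold degEulerianNum
    rw [hrange]
    have step1 : ∀ i ∈ Finset.range k,
        ((n+1).choose i : ℝ) * (-1)^i * dfall l (((k-1 : ℕ) : ℝ) - i + 1) n
          = ∑ j ∈ Finset.range (n+1),
              S j * (((n+1).choose i : ℝ) * (-1)^i * ((j.factorial : ℝ) * (((k-i).choose j : ℕ) : ℝ))) := by
      intro i hi
      have hik : i < k := Finset.mem_range.mp hi
      have e1 : ((k-1 : ℕ) : ℝ) - i + 1 = (((k - i : ℕ) : ℕ) : ℝ) := by
        rw [Nat.cast_sub hk1, Nat.cast_sub (le_of_lt hik)]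
        push_cast
        ring
      rw [e1, hS, Finset.mul_sum]
      apply Finset.sum_congr rfl
      intro j _
      rw [dfall_one_eq]
      ring
    rw [Finset.sum_congr rfl step1, Finset.sum_comm, Finset.sum_mul]
    apply Finset.sum_congr rfl
    intro j _
    rw [Finset.sum_mul, Finset.mul_sum, Finset.mul_sum, Finset.mul_sum]
    apply Finset.sum_congr rfl
    intro i _
    ring
  rw [Finset.sum_congr rfl key, Finset.sum_comm]
  apply Finset.sum_congr rfl
  intro j hj
  have hjn : j ≤ n := Nat.lt_succ_iff.mp (Finset.mem_range.mp hj)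
  rcases Nat.eq_zero_or_pos j with hj0 | hj0
  · subst hj0
    simp [hS0]
  · have hFa : ∀ k ∈ Finset.Icc 1 n,
        S j * ((j.factorial : ℝ) * (x^k *
          ∑ i ∈ Finset.range k, (-1:ℝ)^i * ((n+1).choose i : ℝ) * (((k-i).choose j : ℕ) : ℝ)))
        = S j * ((j.factorial : ℝ) * (x^k * Fa n j k)) := by
      intro k hk
      have : Fa n j k = ∑ i ∈ Finset.range k, (-1:ℝ)^i * ((n+1).choose i : ℝ) * (((k-i).choose j : ℕ) : ℝ) := by
        unfold Fa
        rw [Finset.sum_range_succ, Nat.sub_self, Nat.choose_eq_zero_of_lt hj0]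
        simp
      rw [this]
    rw [Finset.sum_congr rfl hFa, ← Finset.mul_sum, ← Finset.mul_sum, sumxF n j hj0 hjn x]
    ring
end

section
/- For |x| < 1 and n ≥ 1: ∑_{k=1}^∞ (k)_{n,λ} x^k = (1/(1-x)^{n+1}) · ∑_{k=1}^{n} A_λ(n, k-1) x^k. -/
open Finset PowerSeries

lemma fwdDiff_poly_eval : ∀ (m : ℕ) (p : Polynomial ℝ), p.natDegree ≤ m →
    (fwdDiff (1:ℝ))^[m+1] (fun t : ℝ => p.eval t) = fun _ => 0 := by
  intro m
  induction m with
  | zero =>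
    intro p hp
    rw [Polynomial.eq_C_of_natDegree_le_zero hp]
    simp only [Polynomial.eval_C, Function.iterate_one]
    exact fwdDiff_const 1 _
  | succ m IH =>
    intro p hp
    rw [Function.iterate_succ_apply]
    have hΔ : fwdDiff (1:ℝ) (fun t : ℝ => p.eval t) =
        fun t : ℝ => (p.comp (Polynomial.X + Polynomial.C 1) - p).eval t := by
      funext t
      simp [fwdDiff, Polynomial.eval_comp]
    rw [hΔ]
    apply IH
    set q := p.comp (Polynomial.X + Polynomial.C 1) - p with hq
    by_cases hq0 : q = 0
    · rw [hq0]; simp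
    by_cases hp0 : p.natDegree = 0
    · exfalso
      apply hq0
      rw [hq, Polynomial.eq_C_of_natDegree_le_zero hp0.le]
      simp
    have hp' : p ≠ 0 := fun h => hp0 (by simp [h])
    have h1 : (Polynomial.X + Polynomial.C (1:ℝ)).natDegree = 1 := Polynomial.natDegree_X_add_C 1
    have hdc : (p.comp (Polynomial.X + Polynomial.C 1)).natDegree = p.natDegree := by
      rw [Polynomial.natDegree_comp, h1, mul_one]
    have hlc : (p.comp (Polynomial.X + Polynomial.C 1)).leadingCoeff = p.leadingCoeff := by
      rw [Polynomial.leadingCoeff_comp (by rw [h1]; norm_num),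
        (Polynomial.monic_X_add_C (1:ℝ)).leadingCoeff, one_pow, mul_one]
    have hc0 : p.comp (Polynomial.X + Polynomial.C 1) ≠ 0 := fun h =>
      hp' (Polynomial.leadingCoeff_eq_zero.mp
        (by rw [← hlc, h, Polynomial.leadingCoeff_zero]))
    have hdeg : q.degree < p.degree := by
      have := Polynomial.degree_sub_lt (p := p.comp (Polynomial.X + Polynomial.C 1)) (q := p)
        (by rw [Polynomial.degree_eq_natDegree hc0, Polynomial.degree_eq_natDegree hp', hdc])
        hc0 hlc
      rwa [Polynomial.degree_eq_natDegree hc0, hdc, ← Polynomial.degree_eq_natDegree hp'] at this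
    have := Polynomial.natDegree_lt_natDegree hq0 hdeg
    omega

lemma key0 (l : ℝ) (n : ℕ) (y : ℝ) :
    ∑ i ∈ Finset.range (n+2), ((n+1).choose i : ℝ) * (-1)^i * dfall l (y - i + 1) n = 0 := by
  set P : Polynomial ℝ := ∏ i ∈ Finset.range n, (Polynomial.X + Polynomial.C (1 - i * l)) with hP
  have hPdeg : P.natDegree ≤ n := by
    refine le_trans (Polynomial.natDegree_prod_le _ _) (le_of_eq ?_)
    calc ∑ i ∈ Finset.range n, (Polynomial.X + Polynomial.C (1 - (i:ℝ) * l)).natDegree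
        = ∑ _i ∈ Finset.range n, 1 :=
          Finset.sum_congr rfl fun i _ => Polynomial.natDegree_X_add_C _
      _ = n := by simp
  have hPeval : ∀ t : ℝ, P.eval t = dfall l (t + 1) n := by
    intro t
    rw [hP, Polynomial.eval_prod, dfall]
    refine Finset.prod_congr rfl fun i _ => ?_
    simp; ring
  have hvan := fwdDiff_poly_eval n P hPdeg
  have h0 := fwdDiff_iter_eq_sum_shift (1:ℝ) (fun t : ℝ => P.eval t) (n+1) (y - ((n:ℝ)+1))
  rw [hvan] at h0
  have hterm : ∀ j ∈ Finset.range (n+2),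
      ((n+1).choose (n+1-j) : ℝ) * (-1)^(n+1-j) * dfall l (y - ((n+1-j : ℕ):ℝ) + 1) n
        = ((-1 : ℤ) ^ (n + 1 - j) * ((n+1).choose j : ℤ)) •
            P.eval (y - ((n:ℝ)+1) + j • (1:ℝ)) := by
    intro j hj
    rw [Finset.mem_range] at hj
    have hj' : j ≤ n + 1 := by omega
    have harg : y - ((n+1-j : ℕ):ℝ) + 1 = y - ((n:ℝ)+1) + (j • (1:ℝ)) + 1 := by
      rw [nsmul_eq_mul, mul_one, Nat.cast_sub hj']
      push_cast; ring
    rw [Nat.choose_symm hj', harg, hPeval, zsmul_eq_mul]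
    push_cast
    ring
  calc ∑ i ∈ Finset.range (n+2), ((n+1).choose i : ℝ) * (-1)^i * dfall l (y - i + 1) n
      = ∑ j ∈ Finset.range (n+2),
          ((n+1).choose (n+1-j) : ℝ) * (-1)^(n+1-j) * dfall l (y - ((n+1-j : ℕ):ℝ) + 1) n := by
        rw [← Finset.sum_range_reflect
          (fun i => ((n+1).choose i : ℝ) * (-1)^i * dfall l (y - (i:ℝ) + 1) n) (n+2)]
        simp only [show n + 2 - 1 = n + 1 from rfl]
    _ = ∑ j ∈ Finset.range (n+2), ((-1 : ℤ) ^ (n + 1 - j) * ((n+1).choose j : ℤ)) •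
          P.eval (y - ((n:ℝ)+1) + j • (1:ℝ)) := Finset.sum_congr rfl hterm
    _ = 0 := h0.symm

lemma degEulerianNum_eq_zero (l : ℝ) (n m : ℕ) (hm : n + 1 ≤ m) : degEulerianNum l n m = 0 := by
  rw [degEulerianNum]
  rw [← Finset.sum_subset (Finset.range_subset_range.2 (by omega : n + 2 ≤ m + 1))
    (fun i _ hi => by
      rw [Nat.choose_eq_zero_of_lt (by simp only [Finset.mem_range] at hi; omega)]
      simp)]
  exact key0 l n m

lemma degEulerianNum_diag (l : ℝ) (n : ℕ) (hn : 1 ≤ n) : degEulerianNum l n n = 0 := by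
  have h0 := key0 l n (n : ℝ)
  rw [Finset.sum_range_succ] at h0
  have hz : dfall l ((n:ℝ) - ((n+1 : ℕ):ℝ) + 1) n = 0 := by
    have h : (n:ℝ) - ((n+1 : ℕ):ℝ) + 1 = 0 := by push_cast; ring
    rw [h, dfall]
    exact Finset.prod_eq_zero (Finset.mem_range.2 hn) (by simp)
  rw [hz, mul_zero, add_zero] at h0
  rw [degEulerianNum]
  exact h0

lemma summable_dfall_geom (l x : ℝ) (n : ℕ) (hx : |x| < 1) :
    Summable (fun k : ℕ => dfall l ((k:ℝ)+1) n * x ^ k) := by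
  have hgeo : ∀ j : ℕ, Summable (fun k : ℕ => (k:ℝ)^j * |x|^k) := fun j =>
    summable_pow_mul_geometric_of_norm_lt_one j (by rwa [Real.norm_eq_abs, abs_abs])
  have hpow1 : Summable (fun k : ℕ => ((k:ℝ)+1)^n * |x|^k) := by
    have he : ∀ k : ℕ, ∑ j ∈ Finset.range (n+1), ((n.choose j : ℝ) * ((k:ℝ)^j * |x|^k))
        = ((k:ℝ)+1)^n * |x|^k := by
      intro k
      rw [add_pow, Finset.sum_mul]
      refine Finset.sum_congr rfl fun j _ => ?_
      ring
    exact Summable.congr (summable_sum fun j _ => (hgeo j).mul_left _) he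
  refine Summable.of_norm_bounded (hpow1.mul_left ((1 + n * |l|)^n)) ?_
  intro k
  rw [norm_mul, norm_pow, Real.norm_eq_abs, Real.norm_eq_abs]
  have hb : |dfall l ((k:ℝ)+1) n| ≤ (1 + n*|l|)^n * ((k:ℝ)+1)^n := by
    rw [dfall, Finset.abs_prod]
    calc ∏ i ∈ Finset.range n, |(k:ℝ)+1 - i*l|
        ≤ ∏ _i ∈ Finset.range n, ((1 + (n:ℝ)*|l|) * ((k:ℝ)+1)) := by
          refine Finset.prod_le_prod (fun i _ => abs_nonneg _) (fun i hi => ?_)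
          rw [Finset.mem_range] at hi
          have t1 : |(k:ℝ) + 1 - (i:ℝ) * l| ≤ |(k:ℝ) + 1| + |(i:ℝ)*l| := abs_sub _ _
          have t2 : |(k:ℝ) + 1| = (k:ℝ) + 1 := abs_of_nonneg (by positivity)
          have t3 : |(i:ℝ)*l| ≤ (n:ℝ) * |l| := by
            rw [abs_mul, Nat.abs_cast]
            have : (i:ℝ) ≤ n := by exact_mod_cast hi.le
            nlinarith [abs_nonneg l]
          have t4 : (0:ℝ) ≤ (k:ℝ) := Nat.cast_nonneg k
          have t5 : (0:ℝ) ≤ (n:ℝ)*|l| := by positivity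
          nlinarith
      _ = ((1 + (n:ℝ)*|l|) * ((k:ℝ)+1))^n := by
          rw [Finset.prod_const, Finset.card_range]
      _ = (1 + (n:ℝ)*|l|)^n * ((k:ℝ)+1)^n := mul_pow _ _ _
  calc |dfall l ((k:ℝ)+1) n| * |x|^k
      ≤ ((1 + (n:ℝ)*|l|)^n * ((k:ℝ)+1)^n) * |x|^k :=
        mul_le_mul_of_nonneg_right hb (pow_nonneg (abs_nonneg x) k)
    _ = (1 + (n:ℝ)*|l|)^n * (((k:ℝ)+1)^n * |x|^k) := by ring

lemma stepA (l x : ℝ) (n : ℕ) (hx : |x| < 1) :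
    (1 - x) ^ (n+1) * ∑' k : ℕ, dfall l ((k:ℝ)+1) n * x ^ k
      = ∑ m ∈ Finset.range (n+1), degEulerianNum l n m * x ^ m := by
  set a : ℕ → ℝ := fun k => dfall l ((k:ℝ)+1) n with ha
  have hS : Summable (fun k : ℕ => a k * x ^ k) := summable_dfall_geom l x n hx
  set g : ℕ → ℕ → ℝ := fun i m =>
    if i ≤ m then (-1:ℝ)^i * ((n+1).choose i : ℝ) * a (m - i) * x ^ m else 0 with hgdef
  have hg : ∀ i : ℕ, Summable (g i) := by
    intro i
    rw [← summable_nat_add_iff i]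
    refine (hS.mul_left ((-1:ℝ)^i * ((n+1).choose i : ℝ) * x ^ i)).congr fun k => ?_
    simp only [hgdef, le_add_iff_nonneg_left, Nat.zero_le, if_true, Nat.add_sub_cancel,
      pow_add]
    ring
  have hbin : (1 - x) ^ (n+1) = ∑ i ∈ Finset.range (n+2), (-1:ℝ)^i * ((n+1).choose i : ℝ) * x ^ i := by
    rw [sub_eq_neg_add, add_pow]
    refine Finset.sum_congr rfl fun i _ => ?_
    rw [neg_pow]
    ring
  have inner : ∀ m : ℕ, ∑ i ∈ Finset.range (n+2), g i m = degEulerianNum l n m * x ^ m := by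
    intro m
    have hcommon : ∀ i : ℕ, g i m =
        if i ≤ m then ((n+1).choose i : ℝ) * (-1)^i * dfall l ((m:ℝ) - i + 1) n * x ^ m else 0 := by
      intro i
      rw [hgdef]
      by_cases h : i ≤ m
      · simp only [h, if_true, ha]
        rw [Nat.cast_sub h]
        ring_nf
      · simp [h]
    calc ∑ i ∈ Finset.range (n+2), g i m
        = ∑ i ∈ Finset.range (m+n+2),
            (if i ≤ m then ((n+1).choose i : ℝ) * (-1)^i * dfall l ((m:ℝ) - i + 1) n * x ^ m else 0) := by
          rw [← Finset.sum_subset (Finset.range_subset_range.2 (by omega : n + 2 ≤ m + n + 2))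
            (fun i _ hi => by
              simp only [Finset.mem_range] at hi
              rw [Nat.choose_eq_zero_of_lt (by omega : n + 1 < i)]
              simp)]
          exact Finset.sum_congr rfl fun i _ => hcommon i
      _ = ∑ i ∈ Finset.range (m+1),
            (((n+1).choose i : ℝ) * (-1)^i * dfall l ((m:ℝ) - i + 1) n) * x ^ m := by
          rw [← Finset.sum_subset (Finset.range_subset_range.2 (by omega : m + 1 ≤ m + n + 2))
            (fun i _ hi => by
              simp only [Finset.mem_range] at hi
              rw [if_neg (by omega)])]
          refine Finset.sum_congr rfl fun i hi => ?_
          simp only [Finset.mem_range] at hi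
          rw [if_pos (by omega)]
      _ = degEulerianNum l n m * x ^ m := by
          rw [degEulerianNum, Finset.sum_mul]
  calc (1 - x) ^ (n+1) * ∑' k : ℕ, a k * x ^ k
      = ∑ i ∈ Finset.range (n+2), ((-1:ℝ)^i * ((n+1).choose i : ℝ) * x ^ i) * ∑' k : ℕ, a k * x ^ k := by
        rw [hbin, Finset.sum_mul]
    _ = ∑ i ∈ Finset.range (n+2), ∑' m : ℕ, g i m := by
        refine Finset.sum_congr rfl fun i _ => ?_
        rw [← tsum_mul_left, ← Summable.sum_add_tsum_nat_add i (hg i),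
          Finset.sum_eq_zero (fun m hm => by
            simp only [Finset.mem_range] at hm
            rw [hgdef]
            exact if_neg (by omega)), zero_add]
        refine tsum_congr fun k => ?_
        simp only [hgdef, le_add_iff_nonneg_left, Nat.zero_le, if_true, Nat.add_sub_cancel,
          pow_add]
        ring
    _ = ∑' m : ℕ, ∑ i ∈ Finset.range (n+2), g i m := (Summable.tsum_finsetSum (fun i _ => hg i)).symm
    _ = ∑' m : ℕ, degEulerianNum l n m * x ^ m := tsum_congr inner
    _ = ∑ m ∈ Finset.range (n+1), degEulerianNum l n m * x ^ m := by
        refine tsum_eq_sum fun m hm => ?_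
        simp only [Finset.mem_range] at hm
        rw [degEulerianNum_eq_zero l n m (by omega)]
        ring

/-- for `|x| < 1` and `n ≥ 1`:
`∑_{k=1}^∞ (k)_{n,λ} x^k = (1/(1-x)^{n+1}) ∑_{k=1}^n A_λ(n,k-1) x^k`. -/
theorem stmt18 (l : ℝ) (n : ℕ) (hn : 1 ≤ n) (x : ℝ) (hx : |x| < 1) :
    ∑' k : ℕ, dfall l ((k : ℝ) + 1) n * x ^ (k + 1) =
      (1 / (1 - x) ^ (n + 1)) * ∑ k ∈ Finset.Icc 1 n, degEulerianNum l n (k - 1) * x ^ k := by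
  have h1x : (1 : ℝ) - x ≠ 0 := by
    intro h
    rw [sub_eq_zero] at h
    rw [← h] at hx
    simp at hx
  have hpow : ((1:ℝ) - x) ^ (n + 1) ≠ 0 := pow_ne_zero _ h1x
  have hA := stepA l x n hx
  have hQ : ∑ k ∈ Finset.Icc 1 n, degEulerianNum l n (k - 1) * x ^ k
      = x * ∑ m ∈ Finset.range (n + 1), degEulerianNum l n m * x ^ m := by
    rw [Finset.sum_range_succ, degEulerianNum_diag l n hn, zero_mul, add_zero]
    rw [← Finset.Ico_add_one_right_eq_Icc, Finset.sum_Ico_eq_sum_range, Finset.mul_sum]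
    refine Finset.sum_congr rfl fun i _ => ?_
    rw [show 1 + i - 1 = i from by omega]
    ring
  have hL : ∑' k : ℕ, dfall l ((k : ℝ) + 1) n * x ^ (k + 1)
      = x * ∑' k : ℕ, dfall l ((k : ℝ) + 1) n * x ^ k := by
    rw [← tsum_mul_left]
    refine tsum_congr fun k => ?_
    ring
  rw [hL, hQ, ← hA]
  field_simp
end
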